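/- Evaluation of iterated creation operators at the origin: let k ∈ ℕ, let G : ℝ^{2n} → ℂ be a homogeneous polynomial of degree k in the real variables Z, and let α ∈ ℕ^n. Consider the function b^α(G·𝓟(·,0)) obtained by applying b^α to Z ↦ G(Z)𝓟(Z,0). Its value at Z = 0 equals 0 if |α| ≠ k, and equals (−2)^k · ∂^α G/∂z^α (a constant, since |α| = k = deg G) if |α| = k. -/

import Mathlib

open MeasureTheory Complex MvPolynomial

noncomputable section

/-- The Wirtinger derivative `∂/∂z_i` on `ℂⁿ ≅ ℝ^{2n}`, defined via real Fréchet
derivatives in the directions corresponding to the real coordinates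
`Z_{2i-1}, Z_{2i}` (so that `z_i = Z_{2i-1} + √-1 Z_{2i}`). -/
def wirtingerZ (n : ℕ) (i : Fin n) (f : (Fin n → ℂ) → ℂ) (Z : Fin n → ℂ) : ℂ :=
  (1 / 2 : ℂ) * (fderiv ℝ f Z (Pi.single i 1) - Complex.I * fderiv ℝ f Z (Pi.single i Complex.I))

/-- The Wirtinger derivative `∂/∂z̄_i`. -/
def wirtingerZBar (n : ℕ) (i : Fin n) (f : (Fin n → ℂ) → ℂ) (Z : Fin n → ℂ) : ℂ :=
  (1 / 2 : ℂ) * (fderiv ℝ f Z (Pi.single i 1) + Complex.I * fderiv ℝ f Z (Pi.single i Complex.I))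

/-- The annihilation-type operator `b_i f = -2 ∂f/∂z_i + π z̄_i f`. -/
def bOp (n : ℕ) (i : Fin n) (f : (Fin n → ℂ) → ℂ) : (Fin n → ℂ) → ℂ :=
  fun Z => -2 * wirtingerZ n i f Z + (Real.pi : ℂ) * (starRingEnd ℂ) (Z i) * f Z

/-- The creation-type operator `b_i⁺ f = 2 ∂f/∂z̄_i + π z_i f`. -/
def bPlusOp (n : ℕ) (i : Fin n) (f : (Fin n → ℂ) → ℂ) : (Fin n → ℂ) → ℂ :=
  fun Z => 2 * wirtingerZBar n i f Z + (Real.pi : ℂ) * Z i * f Z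

/-- The model operator `𝓛 f = Σ_i b_i (b_i⁺ f)`. -/
def modelL (n : ℕ) (f : (Fin n → ℂ) → ℂ) : (Fin n → ℂ) → ℂ :=
  fun Z => ∑ i : Fin n, bOp n i (bPlusOp n i f) Z

/-- `b^α = b_1^{α_1} ∘ ⋯ ∘ b_n^{α_n}`. -/
def bPow (n : ℕ) (α : Fin n → ℕ) : ((Fin n → ℂ) → ℂ) → ((Fin n → ℂ) → ℂ) :=
  (List.finRange n).foldr (fun i T => (bOp n i)^[α i] ∘ T) id

/-- The Gaussian `e^{-π|z|²/2}`. -/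
def modelGauss (n : ℕ) (Z : Fin n → ℂ) : ℂ :=
  Complex.exp (-((Real.pi : ℂ) / 2) * ∑ i : Fin n, (Complex.normSq (Z i) : ℂ))

/-- The model Bergman kernel
`𝓟(Z,Z') = exp(-(π/2) Σ_i (|z_i|² + |z'_i|² - 2 z_i z̄'_i))`. -/
def modelP (n : ℕ) (Z Z' : Fin n → ℂ) : ℂ :=
  Complex.exp (-((Real.pi : ℂ) / 2) *
    ∑ i : Fin n, ((Complex.normSq (Z i) : ℂ) + (Complex.normSq (Z' i) : ℂ)
      - 2 * Z i * (starRingEnd ℂ) (Z' i)))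

/-- The eigenfunctions `E_{α,β} = b^α (z^β e^{-π|z|²/2})`. -/
def eigFun (n : ℕ) (α β : Fin n → ℕ) : (Fin n → ℂ) → ℂ :=
  bPow n α (fun Z => (∏ i : Fin n, Z i ^ β i) * modelGauss n Z)


/-- Evaluation of a complex polynomial in the 2n real coordinates of `Z ∈ ℝ^{2n}`,
encoded as a polynomial in the variables `z` (inl block) and `z̄` (inr block). -/
def evalPolyZ (n : ℕ) (P : MvPolynomial (Fin n ⊕ Fin n) ℂ) (Z : Fin n → ℂ) : ℂ :=
  MvPolynomial.eval (Sum.elim Z fun j => (starRingEnd ℂ) (Z j)) P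

/-- The iterated holomorphic derivative `∂^α/∂z^α` on polynomials. -/
def pderivZPow (n : ℕ) (α : Fin n → ℕ) (P : MvPolynomial (Fin n ⊕ Fin n) ℂ) :
    MvPolynomial (Fin n ⊕ Fin n) ℂ :=
  (List.finRange n).foldr (fun i Q => (MvPolynomial.pderiv (Sum.inl i))^[α i] Q) P

namespace S13

variable (n : ℕ)

def cproj (i : Fin n) : (Fin n → ℂ) →L[ℝ] ℂ := ContinuousLinearMap.proj i

def cprojbar (i : Fin n) : (Fin n → ℂ) →L[ℝ] ℂ :=
  (Complex.conjCLE.toContinuousLinearMap).comp (cproj n i)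

@[simp] lemma cproj_apply (i : Fin n) (V : Fin n → ℂ) : cproj n i V = V i := rfl
@[simp] lemma cprojbar_apply (i : Fin n) (V : Fin n → ℂ) :
    cprojbar n i V = (starRingEnd ℂ) (V i) := rfl

def wOf (D : (Fin n → ℂ) →L[ℝ] ℂ) (i : Fin n) : ℂ :=
  (1 / 2 : ℂ) * (D (Pi.single i 1) - Complex.I * D (Pi.single i Complex.I))

lemma wirtingerZ_eq {f : (Fin n → ℂ) → ℂ} {D : (Fin n → ℂ) →L[ℝ] ℂ} {Z : Fin n → ℂ}
    (h : HasFDerivAt f D Z) (i : Fin n) : wirtingerZ n i f Z = wOf n D i := by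
  rw [wirtingerZ, h.fderiv]; rfl

lemma wOf_add (D₁ D₂ : (Fin n → ℂ) →L[ℝ] ℂ) (i : Fin n) :
    wOf n (D₁ + D₂) i = wOf n D₁ i + wOf n D₂ i := by
  simp [wOf]; ring

lemma wOf_smul (a : ℂ) (D : (Fin n → ℂ) →L[ℝ] ℂ) (i : Fin n) :
    wOf n (a • D) i = a * wOf n D i := by
  simp [wOf, smul_eq_mul]; ring

lemma wOf_sum {ι : Type*} (s : Finset ι) (D : ι → ((Fin n → ℂ) →L[ℝ] ℂ)) (i : Fin n) :
    wOf n (∑ j ∈ s, D j) i = ∑ j ∈ s, wOf n (D j) i := by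
  simp [wOf, ContinuousLinearMap.sum_apply, Finset.mul_sum, ← Finset.sum_sub_distrib]

lemma wOf_cproj (j i : Fin n) : wOf n (cproj n j) i = if j = i then 1 else 0 := by
  simp [wOf, Pi.single_apply]
  split_ifs with h <;> simp [Complex.I_mul_I] <;> ring

lemma wOf_cprojbar (j i : Fin n) : wOf n (cprojbar n j) i = 0 := by
  simp [wOf, Pi.single_apply, apply_ite (starRingEnd ℂ), Complex.conj_I]

def DpolyLM (Q : MvPolynomial (Fin n ⊕ Fin n) ℂ) (Z : Fin n → ℂ) : (Fin n → ℂ) →L[ℝ] ℂ :=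
  ∑ j : Fin n, (evalPolyZ n (MvPolynomial.pderiv (Sum.inl j) Q) Z • cproj n j
    + evalPolyZ n (MvPolynomial.pderiv (Sum.inr j) Q) Z • cprojbar n j)

lemma hasFDerivAt_evalPolyZ (Q : MvPolynomial (Fin n ⊕ Fin n) ℂ) (Z : Fin n → ℂ) :
    HasFDerivAt (evalPolyZ n Q) (DpolyLM n Q Z) Z := by
  induction Q using MvPolynomial.induction_on with
  | C a =>
      have h1 : evalPolyZ n (C a) = fun _ : Fin n → ℂ => a := by
        funext W; simp [evalPolyZ]
      have h2 : DpolyLM n (C a) Z = 0 := by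
        ext V
        simp [DpolyLM, evalPolyZ]
      rw [h1, h2]; exact hasFDerivAt_const a Z
  | add p q hp hq =>
      have h1 : evalPolyZ n (p + q) = fun W => evalPolyZ n p W + evalPolyZ n q W := by
        funext W; simp [evalPolyZ]
      have h2 : DpolyLM n (p + q) Z = DpolyLM n p Z + DpolyLM n q Z := by
        simp only [DpolyLM, map_add]
        rw [← Finset.sum_add_distrib]
        refine Finset.sum_congr rfl fun j _ => ?_
        have e1 : evalPolyZ n (pderiv (Sum.inl j) p + pderiv (Sum.inl j) q) Z
            = evalPolyZ n (pderiv (Sum.inl j) p) Z + evalPolyZ n (pderiv (Sum.inl j) q) Z := by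
          simp [evalPolyZ]
        have e2 : evalPolyZ n (pderiv (Sum.inr j) p + pderiv (Sum.inr j) q) Z
            = evalPolyZ n (pderiv (Sum.inr j) p) Z + evalPolyZ n (pderiv (Sum.inr j) q) Z := by
          simp [evalPolyZ]
        rw [e1, e2]; module
      rw [h1, h2]; exact hp.add hq
  | mul_X p j hp =>
      cases j with
      | inl i =>
          have h1 : evalPolyZ n (p * X (Sum.inl i)) = fun W => evalPolyZ n p W * W i := by
            funext W; simp [evalPolyZ]
          have hXi : HasFDerivAt (fun W : Fin n → ℂ => W i) (cproj n i) Z :=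
            (cproj n i).hasFDerivAt
          have h2 : DpolyLM n (p * X (Sum.inl i)) Z
              = evalPolyZ n p Z • cproj n i + Z i • DpolyLM n p Z := by
            ext V
            simp only [DpolyLM, ContinuousLinearMap.sum_apply, ContinuousLinearMap.add_apply,
              ContinuousLinearMap.smul_apply, cproj_apply, cprojbar_apply, smul_eq_mul,
              pderiv_mul, pderiv_X, evalPolyZ, map_add, map_mul, eval_X, Sum.elim_inl,
              Sum.elim_inr, Pi.single_apply, Sum.inl.injEq, reduceCtorEq, if_false,
              apply_ite (MvPolynomial.eval (Sum.elim Z fun j => (starRingEnd ℂ) (Z j))),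
              map_one, map_zero, mul_ite, ite_mul, mul_one, mul_zero, zero_mul, add_zero,
              add_mul, Finset.sum_add_distrib, Finset.sum_ite_eq, Finset.mem_univ, if_true,
              mul_add, Finset.mul_sum]
            simp only [mul_comm, mul_left_comm, mul_assoc]
            abel
          rw [h1, h2]; exact hp.mul hXi
      | inr i =>
          have h1 : evalPolyZ n (p * X (Sum.inr i))
              = fun W => evalPolyZ n p W * (starRingEnd ℂ) (W i) := by
            funext W; simp [evalPolyZ]
          have hXi : HasFDerivAt (fun W : Fin n → ℂ => (starRingEnd ℂ) (W i))
              (cprojbar n i) Z := (cprojbar n i).hasFDerivAt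
          have h2 : DpolyLM n (p * X (Sum.inr i)) Z
              = evalPolyZ n p Z • cprojbar n i + (starRingEnd ℂ) (Z i) • DpolyLM n p Z := by
            ext V
            simp only [DpolyLM, ContinuousLinearMap.sum_apply, ContinuousLinearMap.add_apply,
              ContinuousLinearMap.smul_apply, cproj_apply, cprojbar_apply, smul_eq_mul,
              pderiv_mul, pderiv_X, evalPolyZ, map_add, map_mul, eval_X, Sum.elim_inl,
              Sum.elim_inr, Pi.single_apply, Sum.inr.injEq, reduceCtorEq, if_false,
              apply_ite (MvPolynomial.eval (Sum.elim Z fun j => (starRingEnd ℂ) (Z j))),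
              map_one, map_zero, mul_ite, ite_mul, mul_one, mul_zero, zero_mul, add_zero,
              add_mul, Finset.sum_add_distrib, Finset.sum_ite_eq, Finset.mem_univ, if_true,
              mul_add, Finset.mul_sum]
            simp only [mul_comm, mul_left_comm, mul_assoc]
            abel
          rw [h1, h2]; exact hp.mul hXi

lemma wOf_DpolyLM (Q : MvPolynomial (Fin n ⊕ Fin n) ℂ) (Z : Fin n → ℂ) (i : Fin n) :
    wOf n (DpolyLM n Q Z) i = evalPolyZ n (MvPolynomial.pderiv (Sum.inl i) Q) Z := by
  rw [DpolyLM, wOf_sum]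
  rw [Finset.sum_congr rfl (fun j _ => by
    rw [wOf_add, wOf_smul, wOf_smul, wOf_cproj, wOf_cprojbar, mul_zero, add_zero])]
  simp [Finset.sum_ite_eq, mul_ite]

def DgaussLM (Z : Fin n → ℂ) : (Fin n → ℂ) →L[ℝ] ℂ :=
  modelGauss n Z • (-((Real.pi : ℂ) / 2)) •
    ∑ j : Fin n, (Z j • cprojbar n j + (starRingEnd ℂ) (Z j) • cproj n j)

lemma modelGauss_eq (Z : Fin n → ℂ) :
    modelGauss n Z
      = Complex.exp (-((Real.pi : ℂ) / 2) * ∑ j : Fin n, Z j * (starRingEnd ℂ) (Z j)) := by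
  simp [modelGauss, Complex.mul_conj]

lemma hasFDerivAt_modelGauss (Z : Fin n → ℂ) :
    HasFDerivAt (modelGauss n) (DgaussLM n Z) Z := by
  have hS : HasFDerivAt
      (fun W : Fin n → ℂ => -((Real.pi : ℂ) / 2) * ∑ j : Fin n, W j * (starRingEnd ℂ) (W j))
      ((-((Real.pi : ℂ) / 2)) •
        ∑ j : Fin n, (Z j • cprojbar n j + (starRingEnd ℂ) (Z j) • cproj n j)) Z := by
    refine HasFDerivAt.const_mul ?_ _
    exact HasFDerivAt.fun_sum fun j _ => (cproj n j).hasFDerivAt.mul (cprojbar n j).hasFDerivAt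
  have h := hS.cexp
  have hfun : modelGauss n
      = fun W : Fin n → ℂ =>
        Complex.exp (-((Real.pi : ℂ) / 2) * ∑ j : Fin n, W j * (starRingEnd ℂ) (W j)) := by
    funext W; exact modelGauss_eq n W
  rw [hfun, DgaussLM, modelGauss_eq]
  exact h

lemma wOf_DgaussLM (Z : Fin n → ℂ) (i : Fin n) :
    wOf n (DgaussLM n Z) i
      = modelGauss n Z * (-((Real.pi : ℂ) / 2)) * (starRingEnd ℂ) (Z i) := by
  rw [DgaussLM, wOf_smul, wOf_smul, wOf_sum]
  rw [Finset.sum_congr rfl (fun j _ => by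
    rw [wOf_add, wOf_smul, wOf_smul, wOf_cproj, wOf_cprojbar, mul_zero, zero_add])]
  simp [Finset.sum_ite_eq, mul_ite, mul_assoc]

/-- The polynomial-level creation operator `B_i Q = -2 ∂Q/∂z_i + 2π z̄_i Q`. -/
def Bp (i : Fin n) (Q : MvPolynomial (Fin n ⊕ Fin n) ℂ) : MvPolynomial (Fin n ⊕ Fin n) ℂ :=
  C (-2 : ℂ) * MvPolynomial.pderiv (Sum.inl i) Q
    + C (2 * (Real.pi : ℂ)) * (X (Sum.inr i) * Q)

lemma evalPolyZ_Bp (i : Fin n) (Q : MvPolynomial (Fin n ⊕ Fin n) ℂ) (Z : Fin n → ℂ) :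
    evalPolyZ n (Bp n i Q) Z
      = -2 * evalPolyZ n (MvPolynomial.pderiv (Sum.inl i) Q) Z
        + 2 * (Real.pi : ℂ) * (starRingEnd ℂ) (Z i) * evalPolyZ n Q Z := by
  simp [Bp, evalPolyZ]; ring

lemma bOp_FQ (i : Fin n) (Q : MvPolynomial (Fin n ⊕ Fin n) ℂ) :
    bOp n i (fun W => evalPolyZ n Q W * modelGauss n W)
      = fun W => evalPolyZ n (Bp n i Q) W * modelGauss n W := by
  funext Z
  have hF : HasFDerivAt (fun W => evalPolyZ n Q W * modelGauss n W)
      (evalPolyZ n Q Z • DgaussLM n Z + modelGauss n Z • DpolyLM n Q Z) Z :=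
    (hasFDerivAt_evalPolyZ n Q Z).mul (hasFDerivAt_modelGauss n Z)
  rw [bOp, wirtingerZ_eq n hF i, wOf_add, wOf_smul, wOf_smul, wOf_DgaussLM, wOf_DpolyLM,
    evalPolyZ_Bp]
  ring

lemma bOp_iter_FQ (i : Fin n) (m : ℕ) (Q : MvPolynomial (Fin n ⊕ Fin n) ℂ) :
    (bOp n i)^[m] (fun W => evalPolyZ n Q W * modelGauss n W)
      = fun W => evalPolyZ n ((Bp n i)^[m] Q) W * modelGauss n W := by
  induction m generalizing Q with
  | zero => rfl
  | succ m ih =>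
      rw [Function.iterate_succ_apply, Function.iterate_succ_apply, bOp_FQ, ih]

lemma bPow_FQ_list (α : Fin n → ℕ) (l : List (Fin n)) (Q : MvPolynomial (Fin n ⊕ Fin n) ℂ) :
    (l.foldr (fun i T => (bOp n i)^[α i] ∘ T) id) (fun W => evalPolyZ n Q W * modelGauss n W)
      = fun W => evalPolyZ n (l.foldr (fun i R => (Bp n i)^[α i] R) Q) W * modelGauss n W := by
  induction l with
  | nil => rfl
  | cons i l ih =>
      show (bOp n i)^[α i]
        ((l.foldr (fun i T => (bOp n i)^[α i] ∘ T) id)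
          (fun W => evalPolyZ n Q W * modelGauss n W)) = _
      rw [ih, bOp_iter_FQ]
      rfl

lemma coeff_pderiv' (j : Fin n ⊕ Fin n) (d : (Fin n ⊕ Fin n) →₀ ℕ)
    (Q : MvPolynomial (Fin n ⊕ Fin n) ℂ) :
    coeff d (MvPolynomial.pderiv j Q)
      = ((d j : ℂ) + 1) * coeff (d + Finsupp.single j 1) Q := by
  induction Q using MvPolynomial.induction_on' with
  | add p q hp hq => simp [hp, hq]; ring
  | monomial u a =>
      rw [pderiv_monomial, coeff_monomial, coeff_monomial]
      by_cases h : u = d + Finsupp.single j 1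
      · subst h
        rw [if_pos (add_tsub_cancel_right _ _), if_pos rfl]
        simp only [Finsupp.add_apply, Finsupp.single_eq_same]
        push_cast; ring
      · rw [if_neg h, mul_zero]
        by_cases h0 : u j = 0
        · have hsub : u - Finsupp.single j 1 = u := by
            ext x
            rcases eq_or_ne x j with rfl | hx
            · simp [Finsupp.tsub_apply, h0]
            · simp [Finsupp.tsub_apply, Finsupp.single_apply, (Ne.symm hx)]
          rw [hsub]
          by_cases hud : u = d
          · subst hud; simp [h0]
          · rw [if_neg hud]
        · have hne : u - Finsupp.single j 1 ≠ d := by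
            intro hd
            apply h
            ext x
            have hx := DFunLike.congr_fun hd x
            rw [Finsupp.tsub_apply] at hx
            rcases eq_or_ne x j with rfl | hxj
            · simp only [Finsupp.single_eq_same] at hx ⊢
              rw [Finsupp.add_apply, Finsupp.single_eq_same]
              omega
            · rw [Finsupp.single_apply, if_neg (Ne.symm hxj)] at hx
              rw [Finsupp.add_apply, Finsupp.single_apply, if_neg (Ne.symm hxj)]
              omega
          rw [if_neg hne]

lemma coeff_pderiv_iter (j : Fin n ⊕ Fin n) (m : ℕ) (d : (Fin n ⊕ Fin n) →₀ ℕ)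
    (Q : MvPolynomial (Fin n ⊕ Fin n) ℂ) :
    coeff d ((MvPolynomial.pderiv j)^[m] Q)
      = (↑(∏ t ∈ Finset.range m, (d j + 1 + t)) : ℂ) * coeff (d + Finsupp.single j m) Q := by
  induction m generalizing Q with
  | zero => simp
  | succ m ih =>
      rw [Function.iterate_succ_apply, ih, coeff_pderiv']
      have h1 : (d + Finsupp.single j m) j = d j + m := by
        simp [Finsupp.add_apply]
      have h2 : d + Finsupp.single j m + Finsupp.single j 1
          = d + Finsupp.single j (m + 1) := by
        rw [add_assoc, ← Finsupp.single_add]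
      rw [h1, h2, Finset.prod_range_succ]
      push_cast; ring

lemma coeff_X_mul_zero (j : Fin n ⊕ Fin n) (d : (Fin n ⊕ Fin n) →₀ ℕ)
    (Q : MvPolynomial (Fin n ⊕ Fin n) ℂ) (h : d j = 0) :
    coeff d (X j * Q) = 0 := by
  rw [mul_comm, coeff_mul_X']
  simp [Finsupp.mem_support_iff, h]

lemma coeff_Bp (i : Fin n) (d : (Fin n ⊕ Fin n) →₀ ℕ) (Q : MvPolynomial (Fin n ⊕ Fin n) ℂ)
    (h : d (Sum.inr i) = 0) :
    coeff d (Bp n i Q)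
      = (-2 : ℂ) * (((d (Sum.inl i) : ℂ) + 1) * coeff (d + Finsupp.single (Sum.inl i) 1) Q) := by
  rw [Bp, coeff_add, coeff_C_mul, coeff_C_mul, coeff_X_mul_zero n _ _ _ h, mul_zero, add_zero,
    coeff_pderiv']

lemma coeff_Bp_iter (i : Fin n) (m : ℕ) (d : (Fin n ⊕ Fin n) →₀ ℕ)
    (Q : MvPolynomial (Fin n ⊕ Fin n) ℂ) (h : d (Sum.inr i) = 0) :
    coeff d ((Bp n i)^[m] Q)
      = (-2 : ℂ) ^ m * (↑(∏ t ∈ Finset.range m, (d (Sum.inl i) + 1 + t)) : ℂ)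
        * coeff (d + Finsupp.single (Sum.inl i) m) Q := by
  induction m generalizing Q with
  | zero => simp
  | succ m ih =>
      rw [Function.iterate_succ_apply, ih, coeff_Bp]
      · have h1 : (d + Finsupp.single (Sum.inl i : Fin n ⊕ Fin n) m) (Sum.inl i) = d (Sum.inl i) + m := by
          simp [Finsupp.add_apply]
        have h2 : d + Finsupp.single (Sum.inl i) m + Finsupp.single (Sum.inl i) 1
            = d + Finsupp.single (Sum.inl i) (m + 1) := by
          rw [add_assoc, ← Finsupp.single_add]
        rw [h1, h2, Finset.prod_range_succ, pow_succ]
        push_cast; ring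
      · simp [Finsupp.add_apply, Finsupp.single_apply, h]

lemma coeff_pderiv_fold (α : Fin n → ℕ) (l : List (Fin n)) (hl : l.Nodup)
    (d : (Fin n ⊕ Fin n) →₀ ℕ) (hd : ∀ i ∈ l, d (Sum.inl i) = 0)
    (Q : MvPolynomial (Fin n ⊕ Fin n) ℂ) :
    coeff d (l.foldr (fun i R => (MvPolynomial.pderiv (Sum.inl i))^[α i] R) Q)
      = (↑((l.map fun i => ∏ t ∈ Finset.range (α i), (1 + t)).prod) : ℂ)
        * coeff (d + (l.map fun i => Finsupp.single (Sum.inl i) (α i)).sum) Q := by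
  induction l generalizing d with
  | nil => simp
  | cons i l ih =>
      rw [List.foldr_cons, coeff_pderiv_iter, hd i List.mem_cons_self]
      have hnodup := List.nodup_cons.mp hl
      rw [ih hnodup.2 _ (fun i' hi' => ?_)]
      · rw [List.map_cons, List.map_cons, List.prod_cons, List.sum_cons]
        push_cast
        rw [add_assoc]
        ring
      · have : i ≠ i' := fun he => hnodup.1 (he ▸ hi')
        simp [Finsupp.add_apply, Finsupp.single_apply, hd i' (List.mem_cons_of_mem i hi'), this]

lemma coeff_Bp_fold (α : Fin n → ℕ) (l : List (Fin n)) (hl : l.Nodup)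
    (d : (Fin n ⊕ Fin n) →₀ ℕ) (hd : ∀ i ∈ l, d (Sum.inl i) = 0)
    (hdbar : ∀ j : Fin n, d (Sum.inr j) = 0)
    (Q : MvPolynomial (Fin n ⊕ Fin n) ℂ) :
    coeff d (l.foldr (fun i R => (Bp n i)^[α i] R) Q)
      = (-2 : ℂ) ^ ((l.map α).sum)
        * (↑((l.map fun i => ∏ t ∈ Finset.range (α i), (1 + t)).prod) : ℂ)
        * coeff (d + (l.map fun i => Finsupp.single (Sum.inl i) (α i)).sum) Q := by
  induction l generalizing d with
  | nil => simp
  | cons i l ih =>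
      rw [List.foldr_cons, coeff_Bp_iter n i _ _ _ (hdbar i), hd i List.mem_cons_self]
      have hnodup := List.nodup_cons.mp hl
      rw [ih hnodup.2 _ (fun i' hi' => ?_) (fun j => ?_)]
      · rw [List.map_cons, List.map_cons, List.map_cons, List.prod_cons, List.sum_cons,
          List.sum_cons, pow_add]
        push_cast
        rw [add_assoc]
        ring
      · have : i ≠ i' := fun he => hnodup.1 (he ▸ hi')
        simp [Finsupp.add_apply, Finsupp.single_apply, hd i' (List.mem_cons_of_mem i hi'), this]
      · simp [Finsupp.add_apply, Finsupp.single_apply, hdbar j]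

lemma degree_listsum (α : Fin n → ℕ) (l : List (Fin n)) :
    ((l.map fun i => Finsupp.single (Sum.inl i : Fin n ⊕ Fin n) (α i)).sum).degree
      = (l.map α).sum := by
  rw [Finsupp.degree_eq_weight_one, map_list_sum, List.map_map]
  congr 1
  ext i
  simp [Function.comp, Finsupp.weight_apply, Finsupp.sum_single_index]

end S13

theorem bPow_homogeneous_eval_zero (n : ℕ) (hn : 1 ≤ n) (k : ℕ)
    (G : MvPolynomial (Fin n ⊕ Fin n) ℂ) (hG : G.IsHomogeneous k) (α : Fin n → ℕ) :
    bPow n α (fun Z => evalPolyZ n G Z * modelP n Z 0) 0 =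
      if (∑ i : Fin n, α i) = k then
        (-2 : ℂ)^k * MvPolynomial.eval (fun _ => (0 : ℂ)) (pderivZPow n α G)
      else 0 := by
  classical
  have hPg : (fun Z => evalPolyZ n G Z * modelP n Z 0)
      = fun Z => evalPolyZ n G Z * modelGauss n Z := by
    funext Z
    have h : modelP n Z 0 = modelGauss n Z := by
      simp [modelP, modelGauss]
    rw [h]
  have hg0 : modelGauss n (0 : Fin n → ℂ) = 1 := by simp [modelGauss]
  have hev0 : ∀ Q : MvPolynomial (Fin n ⊕ Fin n) ℂ,
      evalPolyZ n Q (0 : Fin n → ℂ) = MvPolynomial.coeff 0 Q := by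
    intro Q
    have h : (Sum.elim (0 : Fin n → ℂ) fun j => (starRingEnd ℂ) ((0 : Fin n → ℂ) j))
        = (0 : (Fin n ⊕ Fin n) → ℂ) := by
      funext x; cases x <;> simp
    rw [evalPolyZ, h, show (MvPolynomial.eval (0 : (Fin n ⊕ Fin n) → ℂ)) Q
        = MvPolynomial.constantCoeff Q from DFunLike.congr_fun MvPolynomial.eval_zero Q,
      MvPolynomial.constantCoeff_eq]
  have hRHS : MvPolynomial.eval (fun _ => (0 : ℂ)) (pderivZPow n α G)
      = MvPolynomial.coeff 0 (pderivZPow n α G) := by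
    rw [show (MvPolynomial.eval (fun _ => (0 : ℂ)) (pderivZPow n α G))
        = MvPolynomial.constantCoeff (pderivZPow n α G) from
        DFunLike.congr_fun MvPolynomial.eval_zero _, MvPolynomial.constantCoeff_eq]
  rw [hPg, bPow, S13.bPow_FQ_list n α (List.finRange n) G]
  have hL : ((fun W => evalPolyZ n
        ((List.finRange n).foldr (fun i R => (S13.Bp n i)^[α i] R) G) W * modelGauss n W)
      (0 : Fin n → ℂ))
      = MvPolynomial.coeff 0 ((List.finRange n).foldr (fun i R => (S13.Bp n i)^[α i] R) G) := by
    simp only [hg0, mul_one, hev0]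
  rw [hL]
  have hzero1 : ∀ i ∈ List.finRange n, (0 : (Fin n ⊕ Fin n) →₀ ℕ) (Sum.inl i) = 0 := by
    intro i _; simp
  have hzero2 : ∀ j : Fin n, (0 : (Fin n ⊕ Fin n) →₀ ℕ) (Sum.inr j) = 0 := by
    intro j; simp
  rw [S13.coeff_Bp_fold n α (List.finRange n) (List.nodup_finRange n) 0 hzero1 hzero2 G]
  have hpd : MvPolynomial.coeff 0 (pderivZPow n α G)
      = (↑(((List.finRange n).map fun i => ∏ t ∈ Finset.range (α i), (1 + t)).prod) : ℂ)
        * MvPolynomial.coeff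
            (0 + ((List.finRange n).map fun i =>
              Finsupp.single (Sum.inl i : Fin n ⊕ Fin n) (α i)).sum) G := by
    rw [pderivZPow]
    exact S13.coeff_pderiv_fold n α (List.finRange n) (List.nodup_finRange n) 0 hzero1 G
  have hsum : ((List.finRange n).map α).sum = ∑ i : Fin n, α i := (Fin.sum_univ_def α).symm
  have hdeg : (0 + ((List.finRange n).map fun i =>
      Finsupp.single (Sum.inl i : Fin n ⊕ Fin n) (α i)).sum).degree = ∑ i : Fin n, α i := by
    rw [zero_add, S13.degree_listsum, hsum]
  by_cases h : (∑ i : Fin n, α i) = k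
  · rw [if_pos h, hRHS, hpd, hsum, h]
    ring
  · rw [if_neg h]
    have hc : MvPolynomial.coeff
        (0 + ((List.finRange n).map fun i =>
          Finsupp.single (Sum.inl i : Fin n ⊕ Fin n) (α i)).sum) G = 0 :=
      hG.coeff_eq_zero (by rw [hdeg]; exact h)
    rw [hc, mul_zero]
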